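/- Let Y = L* + S* where L* ∈ ℝ^{n₁×n₂} has rank r and is μ-incoherent, and S* ∈ S_{γ*}. If γ > γ* and L⁽⁰⁾ is the rank-r approximation (in Frobenius norm) of F_γ(Y), then ‖L⁽⁰⁾ − L*‖_F ≤ 8 γ μ r √(2r) σ₁(L*), where σ₁(L*) is the largest singular value of L*. -/

import Mathlib

open Matrix MeasureTheory ProbabilityTheory Filter
open scoped BigOperators ENNReal NNReal

noncomputable section

namespace RPCA

variable {n₁ n₂ r : ℕ}

/-- Frobenius norm of a real matrix. -/
def frob (A : Matrix (Fin n₁) (Fin n₂) ℝ) : ℝ :=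
  Real.sqrt (∑ i, ∑ j, (A i j) ^ 2)

/-- Frobenius inner product of two real matrices. -/
def finner (A B : Matrix (Fin n₁) (Fin n₂) ℝ) : ℝ :=
  ∑ i, ∑ j, A i j * B i j

/-- Spectral norm (operator norm) of a real matrix. -/
def spec (A : Matrix (Fin n₁) (Fin n₂) ℝ) : ℝ :=
  sSup {c | ∃ v : Fin n₂ → ℝ, (∑ j, (v j) ^ 2) = 1 ∧
    c = Real.sqrt (∑ i, (∑ j, A i j * v j) ^ 2)}

/-- Smallest singular value of a square matrix. -/
def sigmaMin (A : Matrix (Fin r) (Fin r) ℝ) : ℝ :=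
  sInf {c | ∃ v : Fin r → ℝ, (∑ k, (v k) ^ 2) = 1 ∧
    c = Real.sqrt (∑ i, (∑ k, A i k * v k) ^ 2)}

/-- The γ-th percentile (counting the fraction γ from the largest) of a multiset of reals. -/
def percentile (γ : ℝ) (s : Multiset ℝ) : ℝ :=
  (s.sort (· ≤ ·)).getD (s.card - ⌈γ * s.card⌉₊) 0

/-- Absolute values of the entries of row `i`. -/
def rowAbs (A : Matrix (Fin n₁) (Fin n₂) ℝ) (i : Fin n₁) : Multiset ℝ :=
  (Finset.univ : Finset (Fin n₂)).val.map fun j => |A i j|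

/-- Absolute values of the entries of column `j`. -/
def colAbs (A : Matrix (Fin n₁) (Fin n₂) ℝ) (j : Fin n₂) : Multiset ℝ :=
  (Finset.univ : Finset (Fin n₁)).val.map fun i => |A i j|

/-- The hard-thresholding operator `F_γ`: entries that are simultaneously above the γ-th
percentile of absolute values of their row and of their column are set to zero. -/
def hardThresh (γ : ℝ) (A : Matrix (Fin n₁) (Fin n₂) ℝ) : Matrix (Fin n₁) (Fin n₂) ℝ :=
  Matrix.of fun i j =>
    if percentile γ (rowAbs A i) < |A i j| ∧ percentile γ (colAbs A j) < |A i j| then 0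
    else A i j

/-- Absolute values of the observed entries of row `i`. -/
def rowAbsObs (Φ : Finset (Fin n₁ × Fin n₂)) (A : Matrix (Fin n₁) (Fin n₂) ℝ) (i : Fin n₁) :
    Multiset ℝ :=
  ((Φ.filter fun q => q.1 = i).val).map fun q => |A q.1 q.2|

/-- Absolute values of the observed entries of column `j`. -/
def colAbsObs (Φ : Finset (Fin n₁ × Fin n₂)) (A : Matrix (Fin n₁) (Fin n₂) ℝ) (j : Fin n₂) :
    Multiset ℝ :=
  ((Φ.filter fun q => q.2 = j).val).map fun q => |A q.1 q.2|

/-- Partially observed thresholding operator `F̃_γ`: `F̃_ij A = A i j` if `|A i j|` exceeds the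
γ-th percentile of absolute values of observed entries in both its row and its column,
and `0` otherwise. -/
def hardThreshObs (γ : ℝ) (Φ : Finset (Fin n₁ × Fin n₂)) (A : Matrix (Fin n₁) (Fin n₂) ℝ) :
    Matrix (Fin n₁) (Fin n₂) ℝ :=
  Matrix.of fun i j =>
    if percentile γ (rowAbsObs Φ A i) < |A i j| ∧ percentile γ (colAbsObs Φ A j) < |A i j| then
      A i j
    else 0

/-- `P_Φ`: zero out the entries outside the observed set `Φ`. -/
def projObs (Φ : Finset (Fin n₁ × Fin n₂)) (A : Matrix (Fin n₁) (Fin n₂) ℝ) :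
    Matrix (Fin n₁) (Fin n₂) ℝ :=
  Matrix.of fun i j => if (i, j) ∈ Φ then A i j else 0

/-- The sparsity class `S_{γ*}`: at most `γ* n₂` nonzero entries in each row and at most
`γ* n₁` nonzero entries in each column. -/
def SparseSet (γs : ℝ) (A : Matrix (Fin n₁) (Fin n₂) ℝ) : Prop :=
  (∀ i, (((Finset.univ : Finset (Fin n₂)).filter fun j => A i j ≠ 0).card : ℝ) ≤ γs * n₂) ∧
  (∀ j, (((Finset.univ : Finset (Fin n₁)).filter fun i => A i j ≠ 0).card : ℝ) ≤ γs * n₁)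

/-- Thin SVD `L = U (diagonal s) Vᵀ` with orthonormal `U, V` and positive decreasing
singular values `s`; this encodes that `L` has rank exactly `r`. -/
def IsThinSVD (L : Matrix (Fin n₁) (Fin n₂) ℝ) (U : Matrix (Fin n₁) (Fin r) ℝ)
    (s : Fin r → ℝ) (V : Matrix (Fin n₂) (Fin r) ℝ) : Prop :=
  Uᵀ * U = 1 ∧ Vᵀ * V = 1 ∧ Antitone s ∧ (∀ k, 0 < s k) ∧ L = U * Matrix.diagonal s * Vᵀ

/-- μ-incoherence of the orthonormal SVD factors `U, V`: every row of `U` has Euclidean norm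
at most `√(μ r / n₁)` and every row of `V` has Euclidean norm at most `√(μ r / n₂)`. -/
def Incoherent (μc : ℝ) (U : Matrix (Fin n₁) (Fin r) ℝ) (V : Matrix (Fin n₂) (Fin r) ℝ) :
    Prop :=
  (∀ i, Real.sqrt (∑ k, (U i k) ^ 2) ≤ Real.sqrt (μc * r / n₁)) ∧
  (∀ j, Real.sqrt (∑ k, (V j k) ^ 2) ≤ Real.sqrt (μc * r / n₂))

/-- Tangent-space projection `P_{T_X} D = UUᵀD + DVVᵀ − UUᵀDVVᵀ` at a rank-r point with
orthonormal factors `U, V`. -/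
def tangentProj (U : Matrix (Fin n₁) (Fin r) ℝ) (V : Matrix (Fin n₂) (Fin r) ℝ)
    (D : Matrix (Fin n₁) (Fin n₂) ℝ) : Matrix (Fin n₁) (Fin n₂) ℝ :=
  U * Uᵀ * D + D * (V * Vᵀ) - U * Uᵀ * D * (V * Vᵀ)

/-- `Z` is a best rank-r approximation of `M` in Frobenius norm. -/
def IsBestRankApprox (r : ℕ) (M Z : Matrix (Fin n₁) (Fin n₂) ℝ) : Prop :=
  Z.rank ≤ r ∧ ∀ W : Matrix (Fin n₁) (Fin n₂) ℝ, W.rank ≤ r → frob (M - Z) ≤ frob (M - W)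

/-- Orthographic retraction formula `M V (Uᵀ M V)⁻¹ Uᵀ M` where `M = X + δ`. -/
def orthoRetract (U : Matrix (Fin n₁) (Fin r) ℝ) (V : Matrix (Fin n₂) (Fin r) ℝ)
    (M : Matrix (Fin n₁) (Fin n₂) ℝ) : Matrix (Fin n₁) (Fin n₂) ℝ :=
  M * V * (Uᵀ * M * V)⁻¹ * (Uᵀ * M)

/-- `Lnext` is obtained from `Lk` by applying either the projective or the orthographic
retraction (for the rank-r manifold) to the tangent vector `δ` at `Lk`. -/
def IsRetractUpdate (r : ℕ) (Lk δ Lnext : Matrix (Fin n₁) (Fin n₂) ℝ) : Prop :=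
  IsBestRankApprox r (Lk + δ) Lnext ∨
  ∃ (U : Matrix (Fin n₁) (Fin r) ℝ) (s : Fin r → ℝ) (V : Matrix (Fin n₂) (Fin r) ℝ),
    IsThinSVD Lk U s V ∧ Lnext = orthoRetract U V (Lk + δ)

/-- One step of manifold gradient descent with the fully observed thresholded gradient:
`Lnext = R_{Lk}(−η P_{T_{Lk}} F_γ(Lk − Y))`. -/
def IsGradStep (γ η : ℝ) (r : ℕ) (Y Lk Lnext : Matrix (Fin n₁) (Fin n₂) ℝ) : Prop :=
  ∃ (U : Matrix (Fin n₁) (Fin r) ℝ) (s : Fin r → ℝ) (V : Matrix (Fin n₂) (Fin r) ℝ),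
    IsThinSVD Lk U s V ∧
    IsRetractUpdate r Lk (-(η • tangentProj U V (hardThresh γ (Lk - Y)))) Lnext

/-- One step of manifold gradient descent with the partially observed thresholded gradient:
`Lnext = R_{Lk}(−η P_{T_{Lk}} F̃_γ(Lk − Y))`. -/
def IsGradStepObs (γ η : ℝ) (r : ℕ) (Φ : Finset (Fin n₁ × Fin n₂))
    (Y Lk Lnext : Matrix (Fin n₁) (Fin n₂) ℝ) : Prop :=
  ∃ (U : Matrix (Fin n₁) (Fin r) ℝ) (s : Fin r → ℝ) (V : Matrix (Fin n₂) (Fin r) ℝ),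
    IsThinSVD Lk U s V ∧
    IsRetractUpdate r Lk (-(η • tangentProj U V (hardThreshObs γ Φ (Lk - Y)))) Lnext

end RPCA

namespace RPCA

variable {n₁ n₂ r : ℕ}

/-! ### Auxiliary lemmas for the initialization theorem -/

lemma percentile_le' {γ t : ℝ} {s : Multiset ℝ} [DecidablePred fun x : ℝ => t < x]
    (hk1 : 1 ≤ ⌈γ * s.card⌉₊) (hkn : ⌈γ * s.card⌉₊ ≤ s.card)
    (hcount : (s.filter (fun x => t < x)).card < ⌈γ * s.card⌉₊) :
    percentile γ s ≤ t := by
  by_contra hlt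
  push_neg at hlt
  set l := s.sort (· ≤ ·) with hl
  have hsl : (l : Multiset ℝ) = s := s.sort_eq _
  have hlen : l.length = s.card := s.length_sort _
  set k := ⌈γ * s.card⌉₊ with hk
  set m := s.card - k with hm
  have hmlt : m < l.length := by omega
  have hget : percentile γ s = l[m] := by
    unfold percentile
    rw [List.getD_eq_getElem _ _ hmlt]
  have hsorted : l.Pairwise (· ≤ ·) := s.pairwise_sort _
  have hdrop : ∀ x ∈ l.drop m, t < x := by
    intro x hx
    obtain ⟨i, hi, rfl⟩ := List.getElem_of_mem hx
    have hi' : m + i < l.length := by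
      rw [List.length_drop] at hi; omega
    rw [List.getElem_drop]
    have h2 := hsorted.rel_get_of_le (a := ⟨m, hmlt⟩) (b := ⟨m + i, hi'⟩)
      (by simp only [Fin.mk_le_mk]; omega)
    simp only [List.get_eq_getElem] at h2
    rw [hget] at hlt
    linarith
  have hcount' : (s.filter (fun x => t < x)).card = l.countP (fun x => decide (t < x)) := by
    rw [← hsl]
    simp [Multiset.filter_coe, Multiset.coe_card, List.countP_eq_length_filter]
  have hsplit : (l.drop m).length ≤ l.countP (fun x => decide (t < x)) := by
    calc (l.drop m).length = (l.drop m).countP (fun x => decide (t < x)) := by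
          symm; rw [List.countP_eq_length]
          intro a ha; simpa using hdrop a ha
      _ ≤ l.countP (fun x => decide (t < x)) := by
          conv_rhs => rw [← List.take_append_drop m l]
          rw [List.countP_append]; omega
  rw [List.length_drop] at hsplit
  omega

lemma card_gt_percentile_le' {γ : ℝ} {s : Multiset ℝ}
    [DecidablePred fun x : ℝ => percentile γ s < x]
    (hk1 : 1 ≤ ⌈γ * s.card⌉₊) (hkn : ⌈γ * s.card⌉₊ ≤ s.card) :
    (s.filter (fun x => percentile γ s < x)).card ≤ ⌈γ * s.card⌉₊ - 1 := by
  obtain ⟨c, hc⟩ : ∃ c, percentile γ s = c := ⟨_, rfl⟩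
  simp only [hc]
  set l := s.sort (· ≤ ·) with hl
  have hsl : (l : Multiset ℝ) = s := s.sort_eq _
  have hlen : l.length = s.card := s.length_sort _
  set k := ⌈γ * s.card⌉₊ with hk
  set m := s.card - k with hm
  have hmlt : m < l.length := by omega
  have hget : percentile γ s = l[m] := by
    unfold percentile
    rw [List.getD_eq_getElem _ _ hmlt]
  have hsorted : l.Pairwise (· ≤ ·) := s.pairwise_sort _
  set p : ℝ → Bool := fun x => decide (c < x) with hp
  have hcount' : (s.filter (fun x => c < x)).card = l.countP p := by
    rw [← hsl]
    simp [Multiset.filter_coe, Multiset.coe_card, List.countP_eq_length_filter, p]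
  have htake : (l.take (m+1)).countP p = 0 := by
    rw [List.countP_eq_zero]
    intro a ha
    obtain ⟨i, hi, rfl⟩ := List.getElem_of_mem ha
    have hi2 : i < m + 1 := by
      rw [List.length_take] at hi; omega
    have hi3 : i < l.length := by omega
    rw [List.getElem_take]
    have h2 := hsorted.rel_get_of_le (a := ⟨i, hi3⟩) (b := ⟨m, hmlt⟩)
      (by simp only [Fin.mk_le_mk]; omega)
    simp only [List.get_eq_getElem] at h2
    have hcm : c = l[m] := hc.symm.trans hget
    simp only [p, decide_eq_true_eq, not_lt, hcm]
    exact h2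
  have hsplit : l.countP p ≤ (l.drop (m+1)).length := by
    conv_lhs => rw [← List.take_append_drop (m+1) l]
    rw [List.countP_append, htake]
    have h2 := List.countP_le_length (p := p) (l := l.drop (m+1))
    omega
  rw [List.length_drop] at hsplit
  omega

lemma finner_self (A : Matrix (Fin n₁) (Fin n₂) ℝ) :
    finner A A = ∑ i, ∑ j, (A i j) ^ 2 := by
  simp [finner, sq]

lemma sum_sq_nonneg' (A : Matrix (Fin n₁) (Fin n₂) ℝ) : 0 ≤ ∑ i, ∑ j, (A i j) ^ 2 :=
  Finset.sum_nonneg fun _ _ => Finset.sum_nonneg fun _ _ => sq_nonneg _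

lemma frob_nonneg (A : Matrix (Fin n₁) (Fin n₂) ℝ) : 0 ≤ frob A := Real.sqrt_nonneg _

lemma frob_sq (A : Matrix (Fin n₁) (Fin n₂) ℝ) : frob A ^ 2 = finner A A := by
  rw [frob, Real.sq_sqrt (sum_sq_nonneg' A), finner_self]

lemma finner_add_left (A B C : Matrix (Fin n₁) (Fin n₂) ℝ) :
    finner (A + B) C = finner A C + finner B C := by
  simp [finner, add_mul, Finset.sum_add_distrib]

lemma finner_comm (A B : Matrix (Fin n₁) (Fin n₂) ℝ) : finner A B = finner B A := by
  simp [finner, mul_comm]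

lemma finner_add_right (A B C : Matrix (Fin n₁) (Fin n₂) ℝ) :
    finner A (B + C) = finner A B + finner A C := by
  rw [finner_comm, finner_add_left, finner_comm B A, finner_comm C A]

/-- From Frobenius optimality. -/
lemma opt_ineq (F L0 Ls : Matrix (Fin n₁) (Fin n₂) ℝ)
    (h : frob (F - L0) ≤ frob (F - Ls)) :
    frob (L0 - Ls) ^ 2 ≤ 2 * finner (F - Ls) (L0 - Ls) := by
  have h2 : frob (F - L0) ^ 2 ≤ frob (F - Ls) ^ 2 :=
    pow_le_pow_left₀ (frob_nonneg _) h 2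
  rw [frob_sq, frob_sq] at h2
  rw [frob_sq]
  have e1 : F - Ls = (F - L0) + (L0 - Ls) := by abel
  rw [e1, finner_add_left, finner_add_right, finner_add_right] at h2
  rw [e1, finner_add_left]
  nlinarith [finner_comm (F - L0) (L0 - Ls)]

lemma matrix_rank_sub_le (A B : Matrix (Fin n₁) (Fin n₂) ℝ) :
    (A - B).rank ≤ A.rank + B.rank := by
  rw [Matrix.rank, Matrix.rank, Matrix.rank]
  have h : LinearMap.range (A - B).mulVecLin ≤
      LinearMap.range A.mulVecLin ⊔ LinearMap.range B.mulVecLin := by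
    rintro x ⟨y, rfl⟩
    have e : (A - B).mulVecLin y = A.mulVecLin y - B.mulVecLin y := by
      simp [Matrix.mulVecLin_apply, Matrix.sub_mulVec]
    rw [e]
    exact Submodule.sub_mem _ (Submodule.mem_sup_left (LinearMap.mem_range_self _ y))
      (Submodule.mem_sup_right (LinearMap.mem_range_self _ y))
  exact le_trans (Submodule.finrank_mono h)
    (Submodule.finrank_add_le_finrank_add_finrank _ _)

/-- Bilinear form bound for sparse bounded matrices. -/
lemma bilinear_bound (E : Matrix (Fin n₁) (Fin n₂) ℝ) (a c₁ c₂ : ℝ)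
    (ha : 0 ≤ a) (hc₁ : 0 ≤ c₁) (hc₂ : 0 ≤ c₂)
    (hE : ∀ i j, |E i j| ≤ a)
    (hrow : ∀ i, ((Finset.univ.filter fun j => E i j ≠ 0).card : ℝ) ≤ c₂)
    (hcol : ∀ j, ((Finset.univ.filter fun i => E i j ≠ 0).card : ℝ) ≤ c₁)
    (u : Fin n₁ → ℝ) (v : Fin n₂ → ℝ) :
    |∑ i, ∑ j, E i j * u i * v j| ≤
      a * Real.sqrt (c₂ * ∑ i, (u i) ^ 2) * Real.sqrt (c₁ * ∑ j, (v j) ^ 2) := by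
  classical
  set χ : Fin n₁ → Fin n₂ → ℝ := fun i j => if E i j ≠ 0 then 1 else 0 with hχ
  have hχ01 : ∀ i j, χ i j = 0 ∨ χ i j = 1 := by
    intro i j; by_cases h : E i j ≠ 0 <;> simp [χ, h]
  have step1 : |∑ i, ∑ j, E i j * u i * v j| ≤ a * ∑ i, ∑ j, (χ i j * |u i|) * (χ i j * |v j|) := by
    calc |∑ i, ∑ j, E i j * u i * v j| ≤ ∑ i, |∑ j, E i j * u i * v j| :=
          Finset.abs_sum_le_sum_abs _ _
      _ ≤ ∑ i, ∑ j, |E i j * u i * v j| :=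
          Finset.sum_le_sum fun i _ => Finset.abs_sum_le_sum_abs _ _
      _ ≤ ∑ i, ∑ j, a * ((χ i j * |u i|) * (χ i j * |v j|)) := by
          apply Finset.sum_le_sum; intro i _
          apply Finset.sum_le_sum; intro j _
          rw [abs_mul, abs_mul]
          by_cases h : E i j = 0
          · simp [h, χ]
          · have h1 : χ i j = 1 := by simp [χ, h]
            rw [h1]
            simp only [one_mul]
            calc |E i j| * |u i| * |v j| = |E i j| * (|u i| * |v j|) := by ring
              _ ≤ a * (|u i| * |v j|) :=
                  mul_le_mul_of_nonneg_right (hE i j) (by positivity)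
      _ = a * ∑ i, ∑ j, (χ i j * |u i|) * (χ i j * |v j|) := by
          rw [Finset.mul_sum]; congr 1; ext i; rw [Finset.mul_sum]
  -- Cauchy-Schwarz over the product
  have hsum : ∑ i, ∑ j, (χ i j * |u i|) * (χ i j * |v j|) ≤
      Real.sqrt (c₂ * ∑ i, (u i) ^ 2) * Real.sqrt (c₁ * ∑ j, (v j) ^ 2) := by
    have hCS := Finset.sum_mul_sq_le_sq_mul_sq (Finset.univ : Finset (Fin n₁ × Fin n₂))
      (fun p => χ p.1 p.2 * |u p.1|) (fun p => χ p.1 p.2 * |v p.2|)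
    have hprod : ∑ p : Fin n₁ × Fin n₂, (χ p.1 p.2 * |u p.1|) * (χ p.1 p.2 * |v p.2|)
        = ∑ i, ∑ j, (χ i j * |u i|) * (χ i j * |v j|) := by
      rw [← Finset.sum_product']
      rfl
    have hsq1 : ∑ p : Fin n₁ × Fin n₂, (χ p.1 p.2 * |u p.1|) ^ 2 ≤ c₂ * ∑ i, (u i) ^ 2 := by
      have : ∀ i j, (χ i j * |u i|) ^ 2 = χ i j * (u i)^2 := by
        intro i j; rcases hχ01 i j with h | h <;> simp [h, mul_pow, sq_abs]
      calc ∑ p : Fin n₁ × Fin n₂, (χ p.1 p.2 * |u p.1|) ^ 2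
          = ∑ i, ∑ j, χ i j * (u i)^2 := by
            rw [← Finset.univ_product_univ, Finset.sum_product]; simp_rw [this]
        _ = ∑ i, ((Finset.univ.filter fun j => E i j ≠ 0).card : ℝ) * (u i)^2 := by
            apply Finset.sum_congr rfl; intro i _
            rw [← Finset.sum_mul]
            congr 1
            rw [hχ]
            simp [Finset.sum_ite]
        _ ≤ ∑ i, c₂ * (u i)^2 :=
            Finset.sum_le_sum fun i _ => mul_le_mul_of_nonneg_right (hrow i) (sq_nonneg _)
        _ = c₂ * ∑ i, (u i)^2 := by rw [Finset.mul_sum]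
    have hsq2 : ∑ p : Fin n₁ × Fin n₂, (χ p.1 p.2 * |v p.2|) ^ 2 ≤ c₁ * ∑ j, (v j) ^ 2 := by
      have : ∀ i j, (χ i j * |v j|) ^ 2 = χ i j * (v j)^2 := by
        intro i j; rcases hχ01 i j with h | h <;> simp [h, mul_pow, sq_abs]
      calc ∑ p : Fin n₁ × Fin n₂, (χ p.1 p.2 * |v p.2|) ^ 2
          = ∑ j, ∑ i, χ i j * (v j)^2 := by
            rw [← Finset.univ_product_univ, Finset.sum_product]; simp_rw [this]
            rw [Finset.sum_comm]
        _ = ∑ j, ((Finset.univ.filter fun i => E i j ≠ 0).card : ℝ) * (v j)^2 := by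
            apply Finset.sum_congr rfl; intro j _
            rw [← Finset.sum_mul]
            congr 1
            rw [hχ]
            simp [Finset.sum_ite]
        _ ≤ ∑ j, c₁ * (v j)^2 :=
            Finset.sum_le_sum fun j _ => mul_le_mul_of_nonneg_right (hcol j) (sq_nonneg _)
        _ = c₁ * ∑ j, (v j)^2 := by rw [Finset.mul_sum]
    have hnn : 0 ≤ ∑ i, ∑ j, (χ i j * |u i|) * (χ i j * |v j|) := by
      apply Finset.sum_nonneg; intro i _; apply Finset.sum_nonneg; intro j _
      rcases hχ01 i j with h | h <;> simp [h] <;> positivity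
    have h1 : 0 ≤ c₂ * ∑ i, (u i)^2 :=
      mul_nonneg hc₂ (Finset.sum_nonneg fun i _ => sq_nonneg _)
    have h2 : 0 ≤ c₁ * ∑ j, (v j)^2 :=
      mul_nonneg hc₁ (Finset.sum_nonneg fun j _ => sq_nonneg _)
    have hx2 : (∑ i, ∑ j, (χ i j * |u i|) * (χ i j * |v j|))^2 ≤
        (c₂ * ∑ i, (u i)^2) * (c₁ * ∑ j, (v j)^2) := by
      rw [hprod] at hCS
      have hA : 0 ≤ ∑ p : Fin n₁ × Fin n₂, (χ p.1 p.2 * |u p.1|) ^ 2 :=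
        Finset.sum_nonneg fun p _ => sq_nonneg _
      have hB : 0 ≤ ∑ p : Fin n₁ × Fin n₂, (χ p.1 p.2 * |v p.2|) ^ 2 :=
        Finset.sum_nonneg fun p _ => sq_nonneg _
      nlinarith
    calc ∑ i, ∑ j, (χ i j * |u i|) * (χ i j * |v j|)
        = Real.sqrt ((∑ i, ∑ j, (χ i j * |u i|) * (χ i j * |v j|))^2) :=
          (Real.sqrt_sq hnn).symm
      _ ≤ Real.sqrt ((c₂ * ∑ i, (u i)^2) * (c₁ * ∑ j, (v j)^2)) := Real.sqrt_le_sqrt hx2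
      _ = Real.sqrt (c₂ * ∑ i, (u i)^2) * Real.sqrt (c₁ * ∑ j, (v j)^2) := Real.sqrt_mul h1 _
  calc |∑ i, ∑ j, E i j * u i * v j| ≤ a * ∑ i, ∑ j, (χ i j * |u i|) * (χ i j * |v j|) := step1
    _ ≤ a * (Real.sqrt (c₂ * ∑ i, (u i) ^ 2) * Real.sqrt (c₁ * ∑ j, (v j) ^ 2)) :=
        mul_le_mul_of_nonneg_left hsum ha
    _ = _ := by ring

lemma rowAbs_filter_card (A : Matrix (Fin n₁) (Fin n₂) ℝ) (i : Fin n₁)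
    (p : ℝ → Prop) [DecidablePred p] :
    ((rowAbs A i).filter p).card = (Finset.univ.filter fun j => p |A i j|).card := by
  rw [rowAbs, ← Multiset.countP_eq_card_filter, Multiset.countP_map, ← Finset.filter_val]
  rfl

lemma colAbs_filter_card (A : Matrix (Fin n₁) (Fin n₂) ℝ) (j : Fin n₂)
    (p : ℝ → Prop) [DecidablePred p] :
    ((colAbs A j).filter p).card = (Finset.univ.filter fun i => p |A i j|).card := by
  rw [colAbs, ← Multiset.countP_eq_card_filter, Multiset.countP_map, ← Finset.filter_val]
  rfl

lemma rowAbs_card (A : Matrix (Fin n₁) (Fin n₂) ℝ) (i : Fin n₁) : (rowAbs A i).card = n₂ := by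
  simp [rowAbs]

lemma colAbs_card (A : Matrix (Fin n₁) (Fin n₂) ℝ) (j : Fin n₂) : (colAbs A j).card = n₁ := by
  simp [colAbs]

lemma finner_le_of_rank (E D : Matrix (Fin n₁) (Fin n₂) ℝ) (B : ℝ) (hB : 0 ≤ B)
    (m : ℕ) (hrank : D.rank ≤ m)
    (hbil : ∀ (u : Fin n₁ → ℝ) (v : Fin n₂ → ℝ), |∑ i, ∑ j, E i j * u i * v j| ≤
      B * Real.sqrt (∑ i, (u i)^2) * Real.sqrt (∑ j, (v j)^2)) :
    finner E D ≤ B * Real.sqrt m * frob D := by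
  classical
  set G := Dᵀ * D with hGdef
  have hG : G.IsHermitian := by
    have := isHermitian_conjTranspose_mul_self D
    rwa [conjTranspose_eq_transpose_of_trivial] at this
  set b := hG.eigenvectorBasis with hb
  set lam := hG.eigenvalues with hlam
  set v : Fin n₂ → Fin n₂ → ℝ := fun k => ⇑(b k) with hv
  set w : Fin n₂ → Fin n₁ → ℝ := fun k => D *ᵥ (v k) with hw
  set xfun : Fin n₁ → EuclideanSpace ℝ (Fin n₂) := fun i => WithLp.toLp 2 (fun j => D i j) with hxfun
  -- orthonormality of v
  have hvon : ∀ k l, ∑ j, v k j * v l j = if k = l then 1 else 0 := by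
    intro k l
    have h := hG.eigenvectorBasis.orthonormal
    rw [orthonormal_iff_ite] at h
    have h2 := h k l
    simpa [PiLp.inner_apply, RCLike.inner_apply, conj_trivial, v, mul_comm] using h2
  have hvsum : ∀ k, ∑ j, (v k j)^2 = 1 := by
    intro k
    have := hvon k k
    simpa [sq] using this
  -- w inner products
  have hww : ∀ k l, ∑ i, w k i * w l i = lam k * (if k = l then 1 else 0) := by
    intro k l
    calc ∑ i, w k i * w l i = (D *ᵥ v k) ⬝ᵥ (D *ᵥ v l) := rfl
      _ = ((D *ᵥ v k) ᵥ* D) ⬝ᵥ v l := Matrix.dotProduct_mulVec _ D _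
      _ = (G *ᵥ v k) ⬝ᵥ v l := by
          rw [← Matrix.mulVec_transpose, Matrix.mulVec_mulVec]
      _ = (lam k • v k) ⬝ᵥ v l := by
          rw [show G *ᵥ v k = lam k • v k from hG.mulVec_eigenvectorBasis k]
      _ = lam k * ∑ j, v k j * v l j := by
          rw [smul_dotProduct]; rfl
      _ = lam k * (if k = l then 1 else 0) := by rw [hvon k l]
  have hwsum : ∀ k, ∑ i, (w k i)^2 = lam k := by
    intro k
    have := hww k k
    simpa [sq] using this
  have hlamnn : ∀ k, 0 ≤ lam k := by
    intro k
    rw [← hwsum k]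
    exact Finset.sum_nonneg fun i _ => sq_nonneg _
  -- w k i as inner product
  have hwx : ∀ k i, w k i = inner ℝ (b k) (xfun i) := by
    intro k i
    simp only [hw, hxfun, Matrix.mulVec, dotProduct, PiLp.inner_apply,
      RCLike.inner_apply, conj_trivial]
    apply Finset.sum_congr rfl
    intro j _
    rfl
  -- decomposition of D
  have hexp : ∀ i j, D i j = ∑ k, w k i * v k j := by
    intro i j
    have h1 : D i j = xfun i j := rfl
    rw [h1]
    conv_lhs => rw [← b.sum_repr (xfun i)]
    have h3 : (∑ k, b.repr (xfun i) k • b k) j = ∑ k, (b.repr (xfun i) k • b k) j :=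
      by rw [WithLp.ofLp_sum]; exact Finset.sum_apply (a := j) (g := fun k => b.repr (xfun i) k • b k) (s := Finset.univ)
    rw [h3]
    apply Finset.sum_congr rfl
    intro k _
    rw [b.repr_apply_apply]
    rw [hwx k i]
    simp [PiLp.smul_apply, smul_eq_mul, hv]
  -- Parseval
  have hpars : ∑ k, lam k = ∑ i, ∑ j, (D i j)^2 := by
    have h1 : ∀ i, ∑ k, (inner ℝ (b k) (xfun i) : ℝ) * inner ℝ (b k) (xfun i)
        = ∑ j, xfun i j * xfun i j := by
      intro i
      have h := @OrthonormalBasis.sum_inner_mul_inner (Fin n₂) ℝ _ _ _ _ _ b (xfun i) (xfun i)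
      have h2 : ∀ k, (inner ℝ (b k) (xfun i) : ℝ) = inner ℝ (xfun i) (b k) :=
        fun k => real_inner_comm _ _
      simp_rw [h2] at h ⊢
      rw [h, real_inner_self_eq_norm_sq, EuclideanSpace.real_norm_sq_eq]
      simp only [sq]
    calc ∑ k, lam k = ∑ k, ∑ i, (w k i)^2 := by simp_rw [hwsum]
      _ = ∑ i, ∑ k, (w k i)^2 := Finset.sum_comm
      _ = ∑ i, ∑ j, (D i j)^2 := by
          apply Finset.sum_congr rfl
          intro i _
          simp_rw [sq]
          calc ∑ k, w k i * w k i
              = ∑ k, (inner ℝ (b k) (xfun i) : ℝ) * inner ℝ (b k) (xfun i) := by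
                apply Finset.sum_congr rfl; intro k _; rw [hwx k i]
            _ = ∑ j, xfun i j * xfun i j := h1 i
            _ = ∑ j, D i j * D i j := rfl
  -- swap sums
  have hswap : finner E D = ∑ k, ∑ i, ∑ j, E i j * w k i * v k j := by
    calc finner E D = ∑ i, ∑ j, E i j * D i j := rfl
      _ = ∑ i, ∑ j, ∑ k, E i j * w k i * v k j := by
          apply Finset.sum_congr rfl; intro i _
          apply Finset.sum_congr rfl; intro j _
          rw [hexp i j, Finset.mul_sum]
          apply Finset.sum_congr rfl; intro k _; ring
      _ = ∑ i, ∑ k, ∑ j, E i j * w k i * v k j :=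
          Finset.sum_congr rfl fun i _ => Finset.sum_comm
      _ = ∑ k, ∑ i, ∑ j, E i j * w k i * v k j := Finset.sum_comm
  -- termwise bound
  have hterm : ∀ k, ∑ i, ∑ j, E i j * w k i * v k j ≤ B * Real.sqrt (lam k) := by
    intro k
    have h := hbil (w k) (v k)
    rw [hwsum k, hvsum k] at h
    simpa using (le_trans (le_abs_self _) h)
  have htermz : ∀ k, lam k = 0 → ∑ i, ∑ j, E i j * w k i * v k j = 0 := by
    intro k hk
    have hwz : ∀ i, w k i = 0 := by
      intro i
      have h0 : ∑ i, (w k i)^2 = 0 := by rw [hwsum k, hk]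
      have := (Finset.sum_eq_zero_iff_of_nonneg (fun i _ => sq_nonneg (w k i))).mp h0 i
        (Finset.mem_univ i)
      exact pow_eq_zero_iff (by norm_num) |>.mp this
    apply Finset.sum_eq_zero; intro i _
    apply Finset.sum_eq_zero; intro j _
    rw [hwz i]; ring
  -- restrict to nonzero eigenvalues
  set S : Finset (Fin n₂) := Finset.univ.filter (fun k => lam k ≠ 0) with hS
  have hcardS : (S.card : ℝ) ≤ (m : ℝ) := by
    have h1 : S.card = Fintype.card {k // lam k ≠ 0} := (Fintype.card_subtype _).symm
    have h2 : G.rank = Fintype.card {k // lam k ≠ 0} := hG.rank_eq_card_non_zero_eigs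
    have h3 : G.rank = D.rank := Matrix.rank_transpose_mul_self D
    have : S.card ≤ m := by omega
    exact_mod_cast this
  have hsplit : finner E D = ∑ k ∈ S, ∑ i, ∑ j, E i j * w k i * v k j := by
    rw [hswap, hS]
    symm
    apply Finset.sum_filter_of_ne
    intro k _ hfk
    intro hlk
    exact hfk (htermz k hlk)
  -- Cauchy-Schwarz on eigenvalues
  have hCS2 : ∑ k ∈ S, Real.sqrt (lam k) ≤ Real.sqrt m * frob D := by
    have h1 : (∑ k ∈ S, Real.sqrt (lam k))^2 ≤ (S.card : ℝ) * ∑ k ∈ S, lam k := by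
      have := Finset.sum_mul_sq_le_sq_mul_sq S (fun _ => (1:ℝ)) (fun k => Real.sqrt (lam k))
      simp only [one_mul, one_pow] at this
      calc (∑ k ∈ S, Real.sqrt (lam k))^2 ≤ (∑ _k ∈ S, (1:ℝ)) * ∑ k ∈ S, Real.sqrt (lam k) ^ 2 :=
            this
        _ = (S.card : ℝ) * ∑ k ∈ S, lam k := by
            rw [Finset.sum_const]
            congr 1
            · simp
            · apply Finset.sum_congr rfl; intro k _; exact Real.sq_sqrt (hlamnn k)
    have h2 : ∑ k ∈ S, lam k ≤ frob D ^ 2 := by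
      rw [frob_sq, finner_self]
      rw [← hpars]
      exact Finset.sum_le_sum_of_subset_of_nonneg (Finset.filter_subset _ _)
        (fun k _ _ => hlamnn k)
    have h3 : (∑ k ∈ S, Real.sqrt (lam k))^2 ≤ (m : ℝ) * frob D ^ 2 := by
      calc (∑ k ∈ S, Real.sqrt (lam k))^2 ≤ (S.card : ℝ) * ∑ k ∈ S, lam k := h1
        _ ≤ (m : ℝ) * frob D ^ 2 := by
            apply mul_le_mul hcardS h2 (Finset.sum_nonneg fun k _ => hlamnn k) (Nat.cast_nonneg m)
    have h4 : 0 ≤ ∑ k ∈ S, Real.sqrt (lam k) :=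
      Finset.sum_nonneg fun k _ => Real.sqrt_nonneg _
    calc ∑ k ∈ S, Real.sqrt (lam k) = Real.sqrt ((∑ k ∈ S, Real.sqrt (lam k))^2) :=
          (Real.sqrt_sq h4).symm
      _ ≤ Real.sqrt ((m : ℝ) * frob D ^ 2) := Real.sqrt_le_sqrt h3
      _ = Real.sqrt m * frob D := by
          have hfnn : 0 ≤ frob D := Real.sqrt_nonneg _
          rw [Real.sqrt_mul (Nat.cast_nonneg m), Real.sqrt_sq hfnn]
  -- conclude
  calc finner E D = ∑ k ∈ S, ∑ i, ∑ j, E i j * w k i * v k j := hsplit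
    _ ≤ ∑ k ∈ S, B * Real.sqrt (lam k) := Finset.sum_le_sum fun k _ => hterm k
    _ = B * ∑ k ∈ S, Real.sqrt (lam k) := by rw [Finset.mul_sum]
    _ ≤ B * (Real.sqrt m * frob D) := mul_le_mul_of_nonneg_left hCS2 hB
    _ = B * Real.sqrt m * frob D := by ring

end RPCA


set_option maxHeartbeats 1600000

/-- quality of the initialization, fully observed case. -/
theorem initialization_fully_observed
    {n₁ n₂ r : ℕ} (hr : 0 < r)
    (μc γ γs : ℝ)
    (Lstar Sstar Y L0 : Matrix (Fin n₁) (Fin n₂) ℝ)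
    (Ustar : Matrix (Fin n₁) (Fin r) ℝ) (sstar : Fin r → ℝ)
    (Vstar : Matrix (Fin n₂) (Fin r) ℝ)
    (hSVD : RPCA.IsThinSVD Lstar Ustar sstar Vstar)
    (hinc : RPCA.Incoherent μc Ustar Vstar)
    (hS : RPCA.SparseSet γs Sstar)
    (hY : Y = Lstar + Sstar)
    (hγ0 : 0 < γ) (hγ1 : γ < 1) (hγ : γ > γs)
    (hL0 : RPCA.IsBestRankApprox r (RPCA.hardThresh γ Y) L0) :
    RPCA.frob (L0 - Lstar) ≤
      8 * γ * μc * r * Real.sqrt (2 * r) * sstar ⟨0, hr⟩ := by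
  classical
  obtain ⟨hUU, hVV, hanti, hspos, hLdef⟩ := hSVD
  set σ₁ := sstar ⟨0, hr⟩ with hσ
  have hσpos : 0 < σ₁ := hspos _
  have hUUdiag : ∀ k : Fin r, ∑ i, (Ustar i k)^2 = 1 := by
    intro k
    have h := congrFun (congrFun hUU k) k
    simpa [Matrix.mul_apply, Matrix.transpose_apply, Matrix.one_apply, sq] using h
  have hVVdiag : ∀ k : Fin r, ∑ j, (Vstar j k)^2 = 1 := by
    intro k
    have h := congrFun (congrFun hVV k) k
    simpa [Matrix.mul_apply, Matrix.transpose_apply, Matrix.one_apply, sq] using h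
  have hn₁ : 0 < n₁ := by
    rcases Nat.eq_zero_or_pos n₁ with h | h
    · exfalso
      have h2 := hUUdiag ⟨0, hr⟩
      subst h
      simp at h2
    · exact h
  have hn₂ : 0 < n₂ := by
    rcases Nat.eq_zero_or_pos n₂ with h | h
    · exfalso
      have h2 := hVVdiag ⟨0, hr⟩
      subst h
      simp at h2
    · exact h
  have hn₁' : (0:ℝ) < n₁ := by exact_mod_cast hn₁
  have hn₂' : (0:ℝ) < n₂ := by exact_mod_cast hn₂
  have hr' : (0:ℝ) < r := by exact_mod_cast hr
  -- μc is positive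
  have hμpos : 0 < μc := by
    have h1 : 0 < ∑ i, ∑ k, (Ustar i k)^2 := by
      have hcomm : ∑ i, ∑ k, (Ustar i k)^2 = ∑ k : Fin r, ∑ i, (Ustar i k)^2 :=
        Finset.sum_comm
      rw [hcomm, Finset.sum_congr rfl fun k _ => hUUdiag k]
      simpa using hr'
    obtain ⟨i₀, -, h2⟩ : ∃ i ∈ Finset.univ, 0 < ∑ k, (Ustar i k)^2 := by
      by_contra hcon
      push_neg at hcon
      have : ∑ i, ∑ k, (Ustar i k)^2 ≤ 0 := Finset.sum_nonpos fun i hi => hcon i hi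
      linarith
    have h4 : 0 < Real.sqrt (∑ k, (Ustar i₀ k)^2) := Real.sqrt_pos.mpr h2
    have h5 : 0 < Real.sqrt (μc * r / n₁) := lt_of_lt_of_le h4 (hinc.1 i₀)
    have h6 : 0 < μc * r / n₁ := by
      by_contra hcon
      push_neg at hcon
      rw [Real.sqrt_eq_zero'.mpr hcon] at h5
      exact lt_irrefl 0 h5
    rcases div_pos_iff.mp h6 with ⟨ha, hb⟩ | ⟨ha, hb⟩
    · nlinarith
    · linarith
  have hμrn₁ : 0 ≤ μc * r / n₁ := by positivity
  have hμrn₂ : 0 ≤ μc * r / n₂ := by positivity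
  have hUrow : ∀ i, ∑ k, (Ustar i k)^2 ≤ μc * r / n₁ := by
    intro i
    have h := pow_le_pow_left₀ (Real.sqrt_nonneg _) (hinc.1 i) 2
    rwa [Real.sq_sqrt (Finset.sum_nonneg fun k _ => sq_nonneg _), Real.sq_sqrt hμrn₁] at h
  have hVrow : ∀ j, ∑ k, (Vstar j k)^2 ≤ μc * r / n₂ := by
    intro j
    have h := pow_le_pow_left₀ (Real.sqrt_nonneg _) (hinc.2 j) 2
    rwa [Real.sq_sqrt (Finset.sum_nonneg fun k _ => sq_nonneg _), Real.sq_sqrt hμrn₂] at h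
  -- entrywise bound on Lstar
  set c : ℝ := Real.sqrt (μc * r / n₁) * Real.sqrt (μc * r / n₂) * σ₁ with hc
  have hcnn : 0 ≤ c := by positivity
  have hentry : ∀ i j, Lstar i j = ∑ k, Ustar i k * sstar k * Vstar j k := by
    intro i j
    rw [hLdef]
    simp only [Matrix.mul_apply, Matrix.transpose_apply, Matrix.diagonal_apply]
    apply Finset.sum_congr rfl
    intro k _
    rw [Finset.sum_eq_single k]
    · simp
    · intro b _ hb
      simp [hb]
    · intro hk
      exact absurd (Finset.mem_univ k) hk
  have hLabs : ∀ i j, |Lstar i j| ≤ c := by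
    intro i j
    rw [hentry i j]
    have hCSU : ∑ k, |Ustar i k| * |Vstar j k| ≤
        Real.sqrt (∑ k, (Ustar i k)^2) * Real.sqrt (∑ k, (Vstar j k)^2) := by
      have hCS := Finset.sum_mul_sq_le_sq_mul_sq Finset.univ
        (fun k => |Ustar i k|) (fun k => |Vstar j k|)
      simp only [sq_abs] at hCS
      have hnn : 0 ≤ ∑ k, |Ustar i k| * |Vstar j k| :=
        Finset.sum_nonneg fun k _ => by positivity
      calc ∑ k, |Ustar i k| * |Vstar j k|
          = Real.sqrt ((∑ k, |Ustar i k| * |Vstar j k|)^2) := (Real.sqrt_sq hnn).symm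
        _ ≤ Real.sqrt ((∑ k, (Ustar i k)^2) * ∑ k, (Vstar j k)^2) := Real.sqrt_le_sqrt hCS
        _ = Real.sqrt (∑ k, (Ustar i k)^2) * Real.sqrt (∑ k, (Vstar j k)^2) :=
            Real.sqrt_mul (Finset.sum_nonneg fun k _ => sq_nonneg _) _
    calc |∑ k, Ustar i k * sstar k * Vstar j k|
        ≤ ∑ k, |Ustar i k * sstar k * Vstar j k| := Finset.abs_sum_le_sum_abs _ _
      _ ≤ ∑ k, σ₁ * (|Ustar i k| * |Vstar j k|) := by
          apply Finset.sum_le_sum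
          intro k _
          rw [abs_mul, abs_mul]
          have h1 : |sstar k| = sstar k := abs_of_pos (hspos k)
          have h2 : sstar k ≤ σ₁ := hanti (show (⟨0, hr⟩ : Fin r) ≤ k by
            simp [Fin.le_def])
          calc |Ustar i k| * |sstar k| * |Vstar j k|
              = |sstar k| * (|Ustar i k| * |Vstar j k|) := by ring
            _ ≤ σ₁ * (|Ustar i k| * |Vstar j k|) := by
                apply mul_le_mul_of_nonneg_right _ (by positivity)
                rw [h1]; exact h2
      _ = σ₁ * ∑ k, |Ustar i k| * |Vstar j k| := by rw [Finset.mul_sum]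
      _ ≤ σ₁ * (Real.sqrt (∑ k, (Ustar i k)^2) * Real.sqrt (∑ k, (Vstar j k)^2)) :=
          mul_le_mul_of_nonneg_left hCSU hσpos.le
      _ ≤ σ₁ * (Real.sqrt (μc*r/n₁) * Real.sqrt (μc*r/n₂)) := by
          apply mul_le_mul_of_nonneg_left _ hσpos.le
          exact mul_le_mul (hinc.1 i) (hinc.2 j) (Real.sqrt_nonneg _) (Real.sqrt_nonneg _)
      _ = c := by rw [hc]; ring
  -- ceilings
  have hk₂1 : 1 ≤ ⌈γ * (n₂:ℝ)⌉₊ := Nat.ceil_pos.mpr (by positivity)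
  have hk₂n : ⌈γ * (n₂:ℝ)⌉₊ ≤ n₂ := Nat.ceil_le.mpr (by
    have h := mul_le_mul_of_nonneg_right hγ1.le hn₂'.le
    rwa [one_mul] at h)
  have hk₁1 : 1 ≤ ⌈γ * (n₁:ℝ)⌉₊ := Nat.ceil_pos.mpr (by positivity)
  have hk₁n : ⌈γ * (n₁:ℝ)⌉₊ ≤ n₁ := Nat.ceil_le.mpr (by
    have h := mul_le_mul_of_nonneg_right hγ1.le hn₁'.le
    rwa [one_mul] at h)
  -- RPCA.percentile bounds
  have hPr : ∀ i, RPCA.percentile γ (RPCA.rowAbs Y i) ≤ c := by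
    intro i
    have hc1 : (RPCA.rowAbs Y i).card = n₂ := RPCA.rowAbs_card Y i
    apply RPCA.percentile_le' (by rw [hc1]; exact hk₂1) (by rw [hc1]; exact hk₂n)
    rw [hc1, RPCA.rowAbs_filter_card Y i (fun x => c < x)]
    have hsub : (Finset.univ.filter fun j => c < |Y i j|) ⊆
        (Finset.univ.filter fun j => Sstar i j ≠ 0) := by
      intro j hj
      simp only [Finset.mem_filter, Finset.mem_univ, true_and] at hj ⊢
      intro hS0
      have hYL : Y i j = Lstar i j := by
        rw [hY]; simp [Matrix.add_apply, hS0]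
      rw [hYL] at hj
      exact absurd hj (not_lt.mpr (hLabs i j))
    have hlt : ((Finset.univ.filter fun j => c < |Y i j|).card : ℝ) < ⌈γ * (n₂:ℝ)⌉₊ := by
      calc ((Finset.univ.filter fun j => c < |Y i j|).card : ℝ)
          ≤ ((Finset.univ.filter fun j => Sstar i j ≠ 0).card : ℝ) :=
            Nat.cast_le.mpr (Finset.card_le_card hsub)
        _ ≤ γs * n₂ := hS.1 i
        _ < γ * n₂ := mul_lt_mul_of_pos_right hγ hn₂'
        _ ≤ ⌈γ * (n₂:ℝ)⌉₊ := Nat.le_ceil _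
    exact_mod_cast hlt
  have hPc : ∀ j, RPCA.percentile γ (RPCA.colAbs Y j) ≤ c := by
    intro j
    have hc1 : (RPCA.colAbs Y j).card = n₁ := RPCA.colAbs_card Y j
    apply RPCA.percentile_le' (by rw [hc1]; exact hk₁1) (by rw [hc1]; exact hk₁n)
    rw [hc1, RPCA.colAbs_filter_card Y j (fun x => c < x)]
    have hsub : (Finset.univ.filter fun i => c < |Y i j|) ⊆
        (Finset.univ.filter fun i => Sstar i j ≠ 0) := by
      intro i hi
      simp only [Finset.mem_filter, Finset.mem_univ, true_and] at hi ⊢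
      intro hS0
      have hYL : Y i j = Lstar i j := by
        rw [hY]; simp [Matrix.add_apply, hS0]
      rw [hYL] at hi
      exact absurd hi (not_lt.mpr (hLabs i j))
    have hlt : ((Finset.univ.filter fun i => c < |Y i j|).card : ℝ) < ⌈γ * (n₁:ℝ)⌉₊ := by
      calc ((Finset.univ.filter fun i => c < |Y i j|).card : ℝ)
          ≤ ((Finset.univ.filter fun i => Sstar i j ≠ 0).card : ℝ) :=
            Nat.cast_le.mpr (Finset.card_le_card hsub)
        _ ≤ γs * n₁ := hS.2 j
        _ < γ * n₁ := mul_lt_mul_of_pos_right hγ hn₁'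
        _ ≤ ⌈γ * (n₁:ℝ)⌉₊ := Nat.le_ceil _
    exact_mod_cast hlt
  -- the error matrix
  set F := RPCA.hardThresh γ Y with hF
  set E := F - Lstar with hE
  have hEentry : ∀ i j, E i j =
      (if RPCA.percentile γ (RPCA.rowAbs Y i) < |Y i j| ∧ RPCA.percentile γ (RPCA.colAbs Y j) < |Y i j|
        then 0 else Y i j) - Lstar i j := by
    intro i j
    rw [hE, Matrix.sub_apply, hF]
    rfl
  have hYS : ∀ i j, Y i j - Lstar i j = Sstar i j := by
    intro i j; rw [hY]; simp
  have hEabs : ∀ i j, |E i j| ≤ 2 * c := by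
    intro i j
    rw [hEentry i j]
    by_cases hcond : RPCA.percentile γ (RPCA.rowAbs Y i) < |Y i j| ∧ RPCA.percentile γ (RPCA.colAbs Y j) < |Y i j|
    · rw [if_pos hcond, zero_sub, abs_neg]
      linarith [hLabs i j]
    · rw [if_neg hcond]
      by_cases hS0 : Sstar i j = 0
      · have h0 : Y i j - Lstar i j = 0 := by rw [hYS]; exact hS0
        rw [h0]
        simp only [abs_zero]
        positivity
      · have hYle : |Y i j| ≤ c := by
          rcases not_and_or.mp hcond with h | h
          · exact le_trans (not_lt.mp h) (hPr i)
          · exact le_trans (not_lt.mp h) (hPc j)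
        calc |Y i j - Lstar i j| = |Y i j + -(Lstar i j)| := by ring_nf
          _ ≤ |Y i j| + |-(Lstar i j)| := abs_add_le _ _
          _ = |Y i j| + |Lstar i j| := by rw [abs_neg]
          _ ≤ c + c := add_le_add hYle (hLabs i j)
          _ = 2 * c := by ring
  -- sparsity of E, rows
  have hErow : ∀ i, ((Finset.univ.filter fun j => E i j ≠ 0).card : ℝ) ≤ 2*γ*n₂ := by
    intro i
    have hsub : (Finset.univ.filter fun j => E i j ≠ 0) ⊆
        (Finset.univ.filter fun j => RPCA.percentile γ (RPCA.rowAbs Y i) < |Y i j|) ∪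
        (Finset.univ.filter fun j => Sstar i j ≠ 0) := by
      intro j hj
      simp only [Finset.mem_filter, Finset.mem_union, Finset.mem_univ, true_and] at hj ⊢
      by_cases hcond : RPCA.percentile γ (RPCA.rowAbs Y i) < |Y i j| ∧ RPCA.percentile γ (RPCA.colAbs Y j) < |Y i j|
      · exact Or.inl hcond.1
      · right
        intro hS0
        apply hj
        rw [hEentry i j, if_neg hcond, hYS i j]
        exact hS0
    have h1 : (Finset.univ.filter fun j => RPCA.percentile γ (RPCA.rowAbs Y i) < |Y i j|).card ≤
        ⌈γ * (n₂:ℝ)⌉₊ - 1 := by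
      have hc1 : (RPCA.rowAbs Y i).card = n₂ := RPCA.rowAbs_card Y i
      have h := RPCA.card_gt_percentile_le' (γ := γ) (s := RPCA.rowAbs Y i)
        (by rw [hc1]; exact hk₂1) (by rw [hc1]; exact hk₂n)
      rw [RPCA.rowAbs_filter_card Y i, hc1] at h
      exact h
    have h2 : ((⌈γ * (n₂:ℝ)⌉₊ - 1 : ℕ) : ℝ) ≤ γ * n₂ := by
      have hceil : (⌈γ * (n₂:ℝ)⌉₊ : ℝ) < γ * n₂ + 1 := Nat.ceil_lt_add_one (by positivity)
      rw [Nat.cast_sub hk₂1]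
      push_cast
      linarith
    have h3 : (Finset.univ.filter fun j => E i j ≠ 0).card ≤
        (⌈γ * (n₂:ℝ)⌉₊ - 1) + (Finset.univ.filter fun j => Sstar i j ≠ 0).card := by
      refine le_trans (Finset.card_le_card hsub) (le_trans (Finset.card_union_le _ _) ?_)
      exact add_le_add h1 le_rfl
    calc ((Finset.univ.filter fun j => E i j ≠ 0).card : ℝ)
        ≤ ((⌈γ * (n₂:ℝ)⌉₊ - 1 : ℕ) : ℝ) +
            ((Finset.univ.filter fun j => Sstar i j ≠ 0).card : ℝ) := by exact_mod_cast h3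
      _ ≤ γ*n₂ + γs*n₂ := add_le_add h2 (hS.1 i)
      _ ≤ 2*γ*n₂ := by
          have h := mul_le_mul_of_nonneg_right hγ.le hn₂'.le
          linarith
  -- sparsity of E, columns
  have hEcol : ∀ j, ((Finset.univ.filter fun i => E i j ≠ 0).card : ℝ) ≤ 2*γ*n₁ := by
    intro j
    have hsub : (Finset.univ.filter fun i => E i j ≠ 0) ⊆
        (Finset.univ.filter fun i => RPCA.percentile γ (RPCA.colAbs Y j) < |Y i j|) ∪
        (Finset.univ.filter fun i => Sstar i j ≠ 0) := by
      intro i hi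
      simp only [Finset.mem_filter, Finset.mem_union, Finset.mem_univ, true_and] at hi ⊢
      by_cases hcond : RPCA.percentile γ (RPCA.rowAbs Y i) < |Y i j| ∧ RPCA.percentile γ (RPCA.colAbs Y j) < |Y i j|
      · exact Or.inl hcond.2
      · right
        intro hS0
        apply hi
        rw [hEentry i j, if_neg hcond, hYS i j]
        exact hS0
    have h1 : (Finset.univ.filter fun i => RPCA.percentile γ (RPCA.colAbs Y j) < |Y i j|).card ≤
        ⌈γ * (n₁:ℝ)⌉₊ - 1 := by
      have hc1 : (RPCA.colAbs Y j).card = n₁ := RPCA.colAbs_card Y j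
      have h := RPCA.card_gt_percentile_le' (γ := γ) (s := RPCA.colAbs Y j)
        (by rw [hc1]; exact hk₁1) (by rw [hc1]; exact hk₁n)
      rw [RPCA.colAbs_filter_card Y j, hc1] at h
      exact h
    have h2 : ((⌈γ * (n₁:ℝ)⌉₊ - 1 : ℕ) : ℝ) ≤ γ * n₁ := by
      have hceil : (⌈γ * (n₁:ℝ)⌉₊ : ℝ) < γ * n₁ + 1 := Nat.ceil_lt_add_one (by positivity)
      rw [Nat.cast_sub hk₁1]
      push_cast
      linarith
    have h3 : (Finset.univ.filter fun i => E i j ≠ 0).card ≤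
        (⌈γ * (n₁:ℝ)⌉₊ - 1) + (Finset.univ.filter fun i => Sstar i j ≠ 0).card := by
      refine le_trans (Finset.card_le_card hsub) (le_trans (Finset.card_union_le _ _) ?_)
      exact add_le_add h1 le_rfl
    calc ((Finset.univ.filter fun i => E i j ≠ 0).card : ℝ)
        ≤ ((⌈γ * (n₁:ℝ)⌉₊ - 1 : ℕ) : ℝ) +
            ((Finset.univ.filter fun i => Sstar i j ≠ 0).card : ℝ) := by exact_mod_cast h3
      _ ≤ γ*n₁ + γs*n₁ := add_le_add h2 (hS.2 j)
      _ ≤ 2*γ*n₁ := by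
          have h := mul_le_mul_of_nonneg_right hγ.le hn₁'.le
          linarith
  -- ranks
  have hrankLs : Lstar.rank ≤ r := by
    calc Lstar.rank = (Ustar * (Matrix.diagonal sstar * Vstarᵀ)).rank := by
          rw [hLdef, Matrix.mul_assoc]
      _ ≤ Ustar.rank := Matrix.rank_mul_le_left _ _
      _ ≤ Fintype.card (Fin r) := Matrix.rank_le_card_width _
      _ = r := Fintype.card_fin r
  have hrankD : (L0 - Lstar).rank ≤ 2*r := by
    have h2 := hL0.1
    have h3 := RPCA.matrix_rank_sub_le L0 Lstar
    omega
  -- optimality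
  set d := RPCA.frob (L0 - Lstar) with hd
  have hdnn : 0 ≤ d := RPCA.frob_nonneg _
  have hopt : d^2 ≤ 2 * RPCA.finner E (L0 - Lstar) :=
    RPCA.opt_ineq F L0 Lstar (hL0.2 Lstar hrankLs)
  -- bilinear bound with explicit constant
  have h2γn₂ : 0 ≤ 2*γ*(n₂:ℝ) := by positivity
  have h2γn₁ : 0 ≤ 2*γ*(n₁:ℝ) := by positivity
  set B := 2*c * Real.sqrt (2*γ*(n₂:ℝ)) * Real.sqrt (2*γ*(n₁:ℝ)) with hB
  have hBnn : 0 ≤ B := by positivity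
  have hbil : ∀ (u : Fin n₁ → ℝ) (v : Fin n₂ → ℝ), |∑ i, ∑ j, E i j * u i * v j| ≤
      B * Real.sqrt (∑ i, (u i)^2) * Real.sqrt (∑ j, (v j)^2) := by
    intro u v
    have h := RPCA.bilinear_bound E (2*c) (2*γ*(n₁:ℝ)) (2*γ*(n₂:ℝ)) (by positivity)
      h2γn₁ h2γn₂ hEabs hErow hEcol u v
    calc |∑ i, ∑ j, E i j * u i * v j|
        ≤ 2*c * Real.sqrt (2*γ*(n₂:ℝ) * ∑ i, (u i)^2) *
            Real.sqrt (2*γ*(n₁:ℝ) * ∑ j, (v j)^2) := h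
      _ = B * Real.sqrt (∑ i, (u i)^2) * Real.sqrt (∑ j, (v j)^2) := by
          rw [Real.sqrt_mul h2γn₂, Real.sqrt_mul h2γn₁, hB]
          ring
  have hfin : RPCA.finner E (L0 - Lstar) ≤ B * Real.sqrt ((2*r : ℕ) : ℝ) * d :=
    RPCA.finner_le_of_rank E (L0 - Lstar) B hBnn (2*r) hrankD hbil
  -- compute B
  have hBeq : B = 4*γ*μc*r*σ₁ := by
    have e1 : Real.sqrt (2*γ*(n₁:ℝ)) = Real.sqrt (2*γ) * Real.sqrt (n₁ : ℝ) := by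
      rw [← Real.sqrt_mul (by positivity)]
    have e2 : Real.sqrt (2*γ*(n₂:ℝ)) = Real.sqrt (2*γ) * Real.sqrt (n₂ : ℝ) := by
      rw [← Real.sqrt_mul (by positivity)]
    have e3 : Real.sqrt (2*γ) * Real.sqrt (2*γ) = 2*γ := Real.mul_self_sqrt (by positivity)
    have e4 : Real.sqrt (μc*r/n₁) * Real.sqrt (n₁:ℝ) = Real.sqrt (μc*(r:ℝ)) := by
      rw [← Real.sqrt_mul hμrn₁, div_mul_cancel₀]
      exact ne_of_gt hn₁'
    have e5 : Real.sqrt (μc*r/n₂) * Real.sqrt (n₂:ℝ) = Real.sqrt (μc*(r:ℝ)) := by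
      rw [← Real.sqrt_mul hμrn₂, div_mul_cancel₀]
      exact ne_of_gt hn₂'
    have e6 : Real.sqrt (μc*(r:ℝ)) * Real.sqrt (μc*(r:ℝ)) = μc*r :=
      Real.mul_self_sqrt (by positivity)
    rw [hB, hc, e1, e2]
    calc 2*(Real.sqrt (μc*r/n₁) * Real.sqrt (μc*r/n₂) * σ₁) *
          (Real.sqrt (2*γ) * Real.sqrt (n₂:ℝ)) * (Real.sqrt (2*γ) * Real.sqrt (n₁:ℝ))
        = 2*σ₁*(Real.sqrt (2*γ) * Real.sqrt (2*γ)) *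
            ((Real.sqrt (μc*r/n₁) * Real.sqrt (n₁:ℝ)) *
             (Real.sqrt (μc*r/n₂) * Real.sqrt (n₂:ℝ))) := by ring
      _ = 2*σ₁*(2*γ)*(Real.sqrt (μc*(r:ℝ)) * Real.sqrt (μc*(r:ℝ))) := by rw [e3, e4, e5]
      _ = 2*σ₁*(2*γ)*(μc*r) := by rw [e6]
      _ = 4*γ*μc*r*σ₁ := by ring
  have hcast : ((2*r : ℕ) : ℝ) = 2*(r:ℝ) := by push_cast; ring
  rw [hBeq, hcast] at hfin
  -- conclude
  have hK : 0 ≤ 8*γ*μc*(r:ℝ)*Real.sqrt (2*(r:ℝ))*σ₁ := by positivity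
  have hd2 : d^2 ≤ (8*γ*μc*(r:ℝ)*Real.sqrt (2*(r:ℝ))*σ₁) * d := by
    linarith [hopt, hfin]
  rcases eq_or_lt_of_le hdnn with h0 | h0
  · rw [← h0]
    exact hK
  · have h2 : d * d ≤ (8*γ*μc*(r:ℝ)*Real.sqrt (2*(r:ℝ))*σ₁) * d := by
      have he : d * d = d^2 := (sq d).symm
      rw [he]; exact hd2
    have h3 := le_of_mul_le_mul_right h2 h0
    linarith
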